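/- arXiv:1612.02194 — 2 statements merged into one kernel-verified Lean document; each statement's English description precedes it below -/
import Mathlib

section
/- Newton's shell theorem in the plane: if f : ℝ² → ℝ is radially symmetric and integrable with ∫ |f(y)| |ln|y|| dy < ∞, then for every x ≠ 0, ∫_{ℝ²} ln|x−y| f(y) dy = ln|x| ∫_{B_{|x|}} f(y) dy + ∫_{ℝ²∖B_{|x|}} ln|y| f(y) dy. -/
open Real MeasureTheory Metric Complex

local notation "e[" θ "]" => Complex.exp ((θ : ℂ) * Complex.I)

lemma slit_aux (w z : ℂ) (hw : ‖w‖ < 1) (hz : ‖z‖ ≤ 1) :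
    1 - w * z ∈ Complex.slitPlane := by
  rw [Complex.mem_slitPlane_iff]
  left
  have h1 : ‖w * z‖ < 1 := by
    rw [norm_mul]
    nlinarith [norm_nonneg w, norm_nonneg z]
  have h2 : (w * z).re ≤ ‖w * z‖ := by
    simpa using Complex.re_le_norm (w * z)
  simp only [Complex.sub_re, Complex.one_re, Complex.sub_im]
  linarith

lemma norm_one_sub_pos (w z : ℂ) (hw : ‖w‖ < 1) (hz : ‖z‖ ≤ 1) :
    0 < ‖1 - w * z‖ := by
  have h1 : ‖w * z‖ < 1 := by
    rw [norm_mul]; nlinarith [norm_nonneg w, norm_nonneg z]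
  have := norm_sub_norm_le (1 : ℂ) (w * z)
  simp only [norm_one] at this
  linarith

lemma contA (w : ℂ) (hw : ‖w‖ < 1) :
    Continuous (fun θ : ℝ => Complex.log (1 - w * e[θ])) := by
  rw [continuous_iff_continuousAt]
  intro θ
  have he : Continuous (fun θ : ℝ => (1 : ℂ) - w * e[θ]) := by
    fun_prop
  have h1 : ‖e[θ]‖ ≤ 1 := by
    simp [Complex.norm_exp_ofReal_mul_I]
  exact he.continuousAt.clog (slit_aux w _ hw h1)

/-- Circle average of `log ‖1 - w e^{iθ}‖` vanishes for `‖w‖ < 1`. -/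
lemma circleAvg_log_one_sub (w : ℂ) (hw : ‖w‖ < 1) :
    ∫ θ in (0:ℝ)..(2*π), Real.log ‖1 - w * e[θ]‖ = 0 := by
  set g : ℂ → ℂ := fun z => Complex.log (1 - w * z) with hg
  have hdiff : ∀ z ∈ closedBall (0:ℂ) 1, DifferentiableAt ℂ g z := by
    intro z hz
    have hz1 : ‖z‖ ≤ 1 := by simpa using mem_closedBall_zero_iff.mp hz
    exact ((differentiableAt_const (1:ℂ)).sub
      ((differentiableAt_const w).mul differentiableAt_id)).clog (slit_aux w z hw hz1)
  have hdc : DiffContOnCl ℂ g (ball (0:ℂ) 1) := by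
    constructor
    · exact fun z hz => (hdiff z (ball_subset_closedBall hz)).differentiableWithinAt
    · rw [closure_ball (0:ℂ) one_ne_zero]
      exact fun z hz => (hdiff z hz).continuousAt.continuousWithinAt
  have key := hdc.circleIntegral_sub_inv_smul (mem_ball_self one_pos)
  have hg0 : g 0 = 0 := by simp [hg, Complex.log_one]
  rw [hg0, smul_zero] at key
  -- key : ∮ z in C(0,1), (z - 0)⁻¹ • g z = 0
  rw [circleIntegral] at key
  simp only [deriv_circleMap, circleMap_zero, Complex.ofReal_one, one_mul, sub_zero, smul_eq_mul] at key
  have key2 : ∫ θ in (0:ℝ)..(2*π), Complex.I * g e[θ] = 0 := by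
    rw [← key]
    apply intervalIntegral.integral_congr
    intro θ _
    have hne : e[θ] ≠ 0 := Complex.exp_ne_zero _
    field_simp
  rw [intervalIntegral.integral_const_mul] at key2
  have key3 : ∫ θ in (0:ℝ)..(2*π), g e[θ] = 0 := by
    rcases mul_eq_zero.mp key2 with h | h
    · exact absurd h Complex.I_ne_zero
    · exact h
  have hre : ∀ θ : ℝ, Real.log ‖1 - w * e[θ]‖ = Complex.reCLM (g e[θ]) := by
    intro θ
    simp [hg, Complex.log_re]
  calc ∫ θ in (0:ℝ)..(2*π), Real.log ‖1 - w * e[θ]‖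
      = ∫ θ in (0:ℝ)..(2*π), Complex.reCLM (g e[θ]) := by
        apply intervalIntegral.integral_congr; intro θ _; exact hre θ
    _ = Complex.reCLM (∫ θ in (0:ℝ)..(2*π), g e[θ]) := by
        rw [ContinuousLinearMap.intervalIntegral_comp_comm]
        exact (contA w hw).intervalIntegrable _ _
    _ = 0 := by rw [key3]; simp

lemma contLog (w : ℂ) (hw : ‖w‖ < 1) :
    Continuous fun θ : ℝ => Real.log ‖1 - w * e[θ]‖ := by
  have h2 : (fun θ : ℝ => Real.log ‖1 - w * e[θ]‖)
      = fun θ : ℝ => (Complex.log (1 - w * e[θ])).re := by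
    funext θ; simp [Complex.log_re]
  rw [h2]
  exact Complex.continuous_re.comp (contA w hw)

lemma norm_exp_one (θ : ℝ) : ‖e[θ]‖ = 1 := by
  simp [Complex.norm_exp_ofReal_mul_I]

lemma norm_sub_exp (w : ℂ) (θ : ℝ) :
    ‖w - e[θ]‖ = ‖1 - (starRingEnd ℂ) w * e[θ]‖ := by
  have he : e[θ] ≠ 0 := Complex.exp_ne_zero _
  have hc : (starRingEnd ℂ) (w - e[θ]) = (starRingEnd ℂ) w - e[θ]⁻¹ := by
    rw [map_sub]
    congr 1
    rw [← Complex.exp_conj]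
    simp [map_mul, Complex.conj_ofReal, Complex.conj_I, Complex.exp_neg]
  calc ‖w - e[θ]‖ = ‖(starRingEnd ℂ) (w - e[θ])‖ := (RCLike.norm_conj _).symm
    _ = ‖(starRingEnd ℂ) w - e[θ]⁻¹‖ := by rw [hc]
    _ = ‖e[θ]⁻¹ * (e[θ] * (starRingEnd ℂ) w - 1)‖ := by
        congr 1; field_simp
    _ = ‖e[θ] * (starRingEnd ℂ) w - 1‖ := by
        rw [norm_mul, norm_inv, norm_exp_one, inv_one, one_mul]
    _ = ‖1 - (starRingEnd ℂ) w * e[θ]‖ := by rw [norm_sub_rev, mul_comm]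

lemma circleAvg_log_sub_exp (w : ℂ) (hw : ‖w‖ < 1) :
    ∫ θ in (0:ℝ)..(2*π), Real.log ‖w - e[θ]‖ = 0 := by
  have hw' : ‖(starRingEnd ℂ) w‖ < 1 := by rwa [RCLike.norm_conj]
  rw [intervalIntegral.integral_congr (g := fun θ : ℝ =>
      Real.log ‖1 - (starRingEnd ℂ) w * e[θ]‖) (fun θ _ => by rw [norm_sub_exp])]
  exact circleAvg_log_one_sub _ hw'

/-- The circle average of `log ‖c - e^{iθ} z‖`. -/
lemma circleAvg_log_sub (c z : ℂ) (hc : c ≠ 0) (hne : ‖z‖ ≠ ‖c‖) :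
    ∫ θ in (0:ℝ)..(2*π), Real.log ‖c - e[θ] * z‖
      = 2 * π * Real.log (max ‖c‖ ‖z‖) := by
  have hcpos : 0 < ‖c‖ := norm_pos_iff.mpr hc
  rcases lt_or_gt_of_ne hne with h | h
  · -- ‖z‖ < ‖c‖
    have hmax : max ‖c‖ ‖z‖ = ‖c‖ := max_eq_left h.le
    have hwn : ‖z / c‖ < 1 := by
      rw [norm_div]; exact (div_lt_one hcpos).mpr h
    have hpt : ∀ θ : ℝ, Real.log ‖c - e[θ] * z‖
        = Real.log ‖c‖ + Real.log ‖1 - (z / c) * e[θ]‖ := by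
      intro θ
      have hfac : c - e[θ] * z = c * (1 - (z / c) * e[θ]) := by
        field_simp
      rw [hfac, norm_mul, Real.log_mul hcpos.ne'
        (norm_one_sub_pos (z / c) e[θ] hwn (norm_exp_one θ).le).ne']
    rw [intervalIntegral.integral_congr (fun θ _ => hpt θ),
      intervalIntegral.integral_add (intervalIntegrable_const)
        ((contLog _ hwn).intervalIntegrable _ _),
      circleAvg_log_one_sub _ hwn, intervalIntegral.integral_const, hmax]
    simp only [smul_eq_mul, add_zero, sub_zero]
  · -- ‖c‖ < ‖z‖
    have hz : z ≠ 0 := by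
      intro hz0; rw [hz0, norm_zero] at h; exact absurd h (not_lt.mpr hcpos.le)
    have hzpos : 0 < ‖z‖ := norm_pos_iff.mpr hz
    have hmax : max ‖c‖ ‖z‖ = ‖z‖ := max_eq_right h.le
    have hwn : ‖c / z‖ < 1 := by
      rw [norm_div]; exact (div_lt_one hzpos).mpr h
    have hpos : ∀ θ : ℝ, 0 < ‖c / z - e[θ]‖ := by
      intro θ
      have := norm_sub_norm_le e[θ] (c / z)
      rw [norm_exp_one, norm_sub_rev] at this
      linarith
    have hpt : ∀ θ : ℝ, Real.log ‖c - e[θ] * z‖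
        = Real.log ‖z‖ + Real.log ‖c / z - e[θ]‖ := by
      intro θ
      have hfac : c - e[θ] * z = z * (c / z - e[θ]) := by
        field_simp
      rw [hfac, norm_mul, Real.log_mul hzpos.ne' (hpos θ).ne']
    have hcont : Continuous fun θ : ℝ => Real.log ‖c / z - e[θ]‖ := by
      have h2 : (fun θ : ℝ => Real.log ‖c / z - e[θ]‖)
          = fun θ : ℝ => Real.log ‖1 - (starRingEnd ℂ) (c / z) * e[θ]‖ := by
        funext θ; rw [norm_sub_exp]
      rw [h2]
      exact contLog _ (by rwa [RCLike.norm_conj])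
    rw [intervalIntegral.integral_congr (fun θ _ => hpt θ),
      intervalIntegral.integral_add (intervalIntegrable_const)
        (hcont.intervalIntegrable _ _),
      circleAvg_log_sub_exp _ hwn, intervalIntegral.integral_const, hmax]
    simp only [smul_eq_mul, add_zero, sub_zero]

local notation "μθ" => MeasureTheory.Measure.restrict (volume : MeasureTheory.Measure ℝ) (Set.Ioc (0:ℝ) (2*Real.pi))

set_option maxHeartbeats 1000000 in
/-- Newton's shell theorem for `ℂ`. -/
lemma newton_shell_complex (F : ℂ → ℝ)
    (hrad : ∀ z w : ℂ, ‖z‖ = ‖w‖ → F z = F w)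
    (hF : Integrable F)
    (hlogF : Integrable (fun z => |F z| * |Real.log ‖z‖|))
    (c : ℂ) (hc : c ≠ 0) :
    (∫ z, Real.log ‖c - z‖ * F z)
      = Real.log ‖c‖ * (∫ z in ball (0:ℂ) ‖c‖, F z)
        + ∫ z in (ball (0:ℂ) ‖c‖)ᶜ, Real.log ‖z‖ * F z := by
  set a : ℝ := ‖c‖ with ha
  have hapos : 0 < a := norm_pos_iff.mpr hc
  have two_pi_pos : (0:ℝ) < 2*π := by positivity
  -- a.e. z, ‖z‖ ≠ a
  have hae : ∀ᵐ z : ℂ, ‖z‖ ≠ a := by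
    have h0 : volume (Metric.sphere (0:ℂ) a) = 0 := Measure.addHaar_sphere volume 0 a
    rw [MeasureTheory.ae_iff]
    refine measure_mono_null ?_ h0
    intro z hz
    simp only [Set.mem_setOf_eq, not_not] at hz
    exact mem_sphere_zero_iff_norm.mpr hz
  -- continuity in θ for good z
  have hcontz : ∀ z : ℂ, ‖z‖ ≠ a →
      Continuous fun θ : ℝ => Real.log ‖c - e[θ] * z‖ := by
    intro z hz
    have hne0 : ∀ θ : ℝ, ‖c - e[θ] * z‖ ≠ 0 := by
      intro θ
      rw [norm_ne_zero_iff]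
      intro h0
      apply hz
      have hceq : c = e[θ] * z := by linear_combination h0
      rw [ha, hceq, norm_mul, norm_exp_one, one_mul]
    exact (by fun_prop : Continuous fun θ : ℝ => ‖c - e[θ] * z‖).log hne0
  -- the circle averages
  have hI : ∀ z : ℂ, ‖z‖ ≠ a →
      (∫ θ, Real.log ‖c - e[θ] * z‖ ∂μθ) = 2*π * Real.log (max a ‖z‖) := by
    intro z hz
    rw [← intervalIntegral.integral_of_le two_pi_pos.le]
    exact circleAvg_log_sub c z hc hz
  -- bound on the average of |log|
  have hJ : ∀ z : ℂ, ‖z‖ ≠ a →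
      (∫ θ, |Real.log ‖c - e[θ] * z‖| ∂μθ)
        ≤ 4*π * Real.log (a + ‖z‖ + 1) + 2*π * |Real.log a| := by
    intro z hz
    have hcont := hcontz z hz
    have hIi : IntervalIntegrable (fun θ : ℝ => Real.log ‖c - e[θ] * z‖)
        volume 0 (2*π) := hcont.intervalIntegrable _ _
    have hIi2 : IntervalIntegrable (fun θ : ℝ => max (Real.log ‖c - e[θ] * z‖) 0)
        volume 0 (2*π) := (hcont.max continuous_const).intervalIntegrable _ _
    have hup : ∀ θ : ℝ, max (Real.log ‖c - e[θ] * z‖) 0 ≤ Real.log (a + ‖z‖ + 1) := by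
      intro θ
      have h1 : ‖c - e[θ] * z‖ ≤ a + ‖z‖ + 1 := by
        calc ‖c - e[θ] * z‖ ≤ ‖c‖ + ‖e[θ] * z‖ := norm_sub_le _ _
          _ = a + ‖z‖ := by rw [norm_mul, norm_exp_one, one_mul, ha]
          _ ≤ a + ‖z‖ + 1 := by linarith
      have h2 : Real.log ‖c - e[θ] * z‖ ≤ Real.log (a + ‖z‖ + 1) := by
        rcases eq_or_ne ‖c - e[θ] * z‖ 0 with h0 | h0
        · rw [h0, Real.log_zero]
          exact Real.log_nonneg (by nlinarith [norm_nonneg z])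
        · exact Real.log_le_log (lt_of_le_of_ne (norm_nonneg _) (Ne.symm h0)) h1
      exact max_le h2 (Real.log_nonneg (by nlinarith [norm_nonneg z]))
    have habs : ∀ θ : ℝ, |Real.log ‖c - e[θ] * z‖|
        = 2 * max (Real.log ‖c - e[θ] * z‖) 0 - Real.log ‖c - e[θ] * z‖ := by
      intro θ
      rcases le_or_gt 0 (Real.log ‖c - e[θ] * z‖) with h | h
      · rw [_root_.abs_of_nonneg h, max_eq_left h]; ring
      · rw [_root_.abs_of_neg h, max_eq_right h.le]; ring
    rw [← intervalIntegral.integral_of_le two_pi_pos.le]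
    rw [intervalIntegral.integral_congr (g := fun θ : ℝ =>
        2 * max (Real.log ‖c - e[θ] * z‖) 0 - Real.log ‖c - e[θ] * z‖)
        (fun θ _ => habs θ)]
    rw [intervalIntegral.integral_sub (hIi2.const_mul 2) hIi,
      intervalIntegral.integral_const_mul,
      circleAvg_log_sub c z hc hz]
    have hb1 : ∫ θ in (0:ℝ)..(2*π), max (Real.log ‖c - e[θ] * z‖) 0
        ≤ ∫ _ in (0:ℝ)..(2*π), Real.log (a + ‖z‖ + 1) := by
      apply intervalIntegral.integral_mono_on two_pi_pos.le hIi2 intervalIntegrable_const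
      intro θ _; exact hup θ
    rw [intervalIntegral.integral_const, smul_eq_mul, sub_zero] at hb1
    have hb2 : Real.log a ≤ Real.log (max a ‖z‖) :=
      Real.log_le_log hapos (le_max_left _ _)
    have hb3 : -|Real.log a| ≤ Real.log a := neg_abs_le _
    nlinarith [Real.pi_pos]
  -- measurability of the 2-variable function
  have hmeas : AEStronglyMeasurable (fun p : ℝ × ℂ => Real.log ‖c - e[p.1] * p.2‖ * F p.2)
      (MeasureTheory.Measure.prod μθ volume) := by
    apply AEStronglyMeasurable.mul
    · apply Measurable.aestronglyMeasurable
      exact Real.measurable_log.comp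
        (by fun_prop : Continuous fun p : ℝ × ℂ => ‖c - e[p.1] * p.2‖).measurable
    · exact hF.aestronglyMeasurable.comp_snd
  -- integrability of the 2-variable function
  have hint : Integrable (fun p : ℝ × ℂ => Real.log ‖c - e[p.1] * p.2‖ * F p.2)
      (MeasureTheory.Measure.prod μθ volume) := by
    rw [integrable_prod_iff' hmeas]
    constructor
    · filter_upwards [hae] with z hz
      exact ((hcontz z hz).mul continuous_const).integrableOn_Ioc
    · apply Integrable.mono'
        ((hF.abs.const_mul (4*π * Real.log (a+2) + 2*π * |Real.log a|)).add
          (hlogF.const_mul (4*π)))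
        ((hmeas.norm.prod_swap).integral_prod_right')
      filter_upwards [hae] with z hz
      simp only [Prod.swap_prod_mk, Pi.add_apply]
      have h1 : ∀ θ : ℝ, ‖Real.log ‖c - e[θ] * z‖ * F z‖
          = |Real.log ‖c - e[θ] * z‖| * |F z| := by
        intro θ; rw [Real.norm_eq_abs, abs_mul]
      have h2 : (∫ θ, ‖Real.log ‖c - e[θ] * z‖ * F z‖ ∂μθ)
          = (∫ θ, |Real.log ‖c - e[θ] * z‖| ∂μθ) * |F z| := by
        rw [MeasureTheory.integral_congr_ae (Filter.Eventually.of_forall h1)]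
        exact MeasureTheory.integral_mul_const _ _
      have h3 : (0:ℝ) ≤ ∫ θ, ‖Real.log ‖c - e[θ] * z‖ * F z‖ ∂μθ :=
        integral_nonneg fun θ => norm_nonneg _
      rw [Real.norm_of_nonneg h3, h2]
      have hlb : Real.log (a + ‖z‖ + 1) ≤ Real.log (a+2) + |Real.log ‖z‖| := by
        rcases le_or_gt ‖z‖ 1 with h | h
        · have hlog2 : Real.log (a + ‖z‖ + 1) ≤ Real.log (a + 2) :=
            Real.log_le_log (by positivity) (by linarith)
          have := abs_nonneg (Real.log ‖z‖)
          linarith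
        · have hz1 : (1:ℝ) < ‖z‖ := h
          have hmul : a + ‖z‖ + 1 ≤ (a+2) * ‖z‖ := by nlinarith
          calc Real.log (a + ‖z‖ + 1) ≤ Real.log ((a+2) * ‖z‖) :=
              Real.log_le_log (by positivity) hmul
            _ = Real.log (a+2) + Real.log ‖z‖ := Real.log_mul (by positivity) (by positivity)
            _ ≤ Real.log (a+2) + |Real.log ‖z‖| := by
                have := le_abs_self (Real.log ‖z‖); linarith
      have hJz := hJ z hz
      have habsF : (0:ℝ) ≤ |F z| := abs_nonneg _
      calc (∫ θ, |Real.log ‖c - e[θ] * z‖| ∂μθ) * |F z|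
          ≤ (4*π * Real.log (a + ‖z‖ + 1) + 2*π * |Real.log a|) * |F z| :=
            mul_le_mul_of_nonneg_right hJz habsF
        _ ≤ (4*π * (Real.log (a+2) + |Real.log ‖z‖|) + 2*π * |Real.log a|) * |F z| := by
            apply mul_le_mul_of_nonneg_right _ habsF
            nlinarith [Real.pi_pos]
        _ = (4*π * Real.log (a+2) + 2*π * |Real.log a|) * |F z|
              + 4*π * (|F z| * |Real.log ‖z‖|) := by ring
  -- rotation invariance: inner z-integral is constant in θ
  have hinner : ∀ θ : ℝ, (∫ z : ℂ, Real.log ‖c - e[θ] * z‖ * F z)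
      = ∫ z : ℂ, Real.log ‖c - z‖ * F z := by
    intro θ
    have hmp := (rotation (Circle.exp θ)).measurePreserving
    have hcomp := hmp.integral_comp
      ((rotation (Circle.exp θ)).toHomeomorph.measurableEmbedding)
      (fun w => Real.log ‖c - w‖ * F w)
    rw [← hcomp]
    apply MeasureTheory.integral_congr_ae
    filter_upwards with z
    have h1 : (rotation (Circle.exp θ)) z = e[θ] * z := by
      rw [rotation_apply, Circle.coe_exp]
    have h2 : F ((rotation (Circle.exp θ)) z) = F z :=
      hrad _ _ ((rotation (Circle.exp θ)).norm_map z)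
    rw [h1] at h2 ⊢
    rw [h2]
  -- Fubini
  have hswap := MeasureTheory.integral_integral_swap
    (f := fun (θ : ℝ) (z : ℂ) => Real.log ‖c - e[θ] * z‖ * F z)
    (μ := μθ) (ν := volume) hint
  have hlhs : (∫ θ, (∫ z : ℂ, Real.log ‖c - e[θ] * z‖ * F z) ∂μθ)
      = 2*π * ∫ z : ℂ, Real.log ‖c - z‖ * F z := by
    rw [MeasureTheory.integral_congr_ae (Filter.Eventually.of_forall hinner)]
    rw [MeasureTheory.integral_const]
    simp only [MeasureTheory.Measure.restrict_apply, MeasurableSet.univ, Set.univ_inter,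
      Real.volume_Ioc, smul_eq_mul]
    rw [Measure.real_def, Measure.restrict_apply MeasurableSet.univ, Set.univ_inter,
      Real.volume_Ioc, ENNReal.toReal_ofReal (by linarith)]
    ring_nf
  have hrhs : (∫ z : ℂ, (∫ θ, Real.log ‖c - e[θ] * z‖ * F z ∂μθ))
      = ∫ z : ℂ, 2*π * (Real.log (max a ‖z‖) * F z) := by
    apply MeasureTheory.integral_congr_ae
    filter_upwards [hae] with z hz
    rw [MeasureTheory.integral_mul_const, hI z hz]
    ring
  -- the radial integrand is integrable
  have hGint : Integrable (fun z : ℂ => Real.log (max a ‖z‖) * F z) := by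
    have hcont : Continuous fun z : ℂ => Real.log (max a ‖z‖) := by
      apply (continuous_const.max continuous_norm).log
      intro z
      have := le_max_left a ‖z‖; positivity
    apply Integrable.mono'
      ((hF.abs.const_mul |Real.log a|).add hlogF)
      (hcont.aestronglyMeasurable.mul hF.aestronglyMeasurable)
    filter_upwards with z
    simp only [Pi.mul_apply, Pi.add_apply, Real.norm_eq_abs, abs_mul]
    rcases le_or_gt ‖z‖ a with h | h
    · rw [max_eq_left h]
      have h2 : (0:ℝ) ≤ |F z| * |Real.log ‖z‖| := by positivity
      nlinarith [abs_nonneg (F z), abs_nonneg (Real.log a)]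
    · rw [max_eq_right h.le]
      have h2 : (0:ℝ) ≤ |Real.log a| * |F z| := by positivity
      nlinarith [abs_nonneg (F z)]
  -- combine: K equals integral of radial average
  have hKrad : (∫ z : ℂ, Real.log ‖c - z‖ * F z)
      = ∫ z : ℂ, Real.log (max a ‖z‖) * F z := by
    have hcomb := hswap.trans hrhs
    rw [hlhs] at hcomb
    rw [MeasureTheory.integral_const_mul] at hcomb
    exact mul_left_cancel₀ two_pi_pos.ne' hcomb
  -- split the integral
  have hsplit := MeasureTheory.integral_add_compl (measurableSet_ball
    (x := (0:ℂ)) (ε := a)) hGint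
  have hball : (∫ z in ball (0:ℂ) a, Real.log (max a ‖z‖) * F z)
      = Real.log a * ∫ z in ball (0:ℂ) a, F z := by
    have heq : Set.EqOn (fun z : ℂ => Real.log (max a ‖z‖) * F z)
        (fun z => Real.log a * F z) (ball (0:ℂ) a) := by
      intro z hz
      simp only
      rw [max_eq_left (mem_ball_zero_iff.mp hz).le]
    rw [MeasureTheory.setIntegral_congr_fun measurableSet_ball heq]
    exact MeasureTheory.integral_const_mul _ _
  have hcompl : (∫ z in (ball (0:ℂ) a)ᶜ, Real.log (max a ‖z‖) * F z)
      = ∫ z in (ball (0:ℂ) a)ᶜ, Real.log ‖z‖ * F z := by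
    have heq : Set.EqOn (fun z : ℂ => Real.log (max a ‖z‖) * F z)
        (fun z => Real.log ‖z‖ * F z) ((ball (0:ℂ) a)ᶜ) := by
      intro z hz
      simp only
      rw [max_eq_right (le_of_not_gt (fun hlt => hz (mem_ball_zero_iff.mpr hlt)))]
    exact MeasureTheory.setIntegral_congr_fun measurableSet_ball.compl heq
  rw [hKrad, ← hsplit, hball, hcompl]

noncomputable def cIso : ℂ ≃ₗᵢ[ℝ] EuclideanSpace ℝ (Fin 2) :=
  ((stdOrthonormalBasis ℝ ℂ).reindex (finCongr Complex.finrank_real_complex)).repr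

/-- Newton's shell theorem in the plane. -/
theorem newton_shell_plane (f : EuclideanSpace ℝ (Fin 2) → ℝ)
    (hrad : ∀ x y : EuclideanSpace ℝ (Fin 2), ‖x‖ = ‖y‖ → f x = f y)
    (hf : Integrable f)
    (hlog : Integrable (fun y => |f y| * |Real.log ‖y‖|))
    (x : EuclideanSpace ℝ (Fin 2)) (hx : x ≠ 0) :
    (∫ y, Real.log ‖x - y‖ * f y)
      = Real.log ‖x‖ * (∫ y in Metric.ball (0 : EuclideanSpace ℝ (Fin 2)) ‖x‖, f y)
        + ∫ y in (Metric.ball (0 : EuclideanSpace ℝ (Fin 2)) ‖x‖)ᶜ, Real.log ‖y‖ * f y := by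
  have hmp : MeasurePreserving cIso volume volume := cIso.measurePreserving
  have hemb : MeasurableEmbedding cIso := cIso.toHomeomorph.measurableEmbedding
  set c : ℂ := cIso.symm x with hcdef
  have hcx : cIso c = x := cIso.apply_symm_apply x
  have hnorm : ‖x‖ = ‖c‖ := by rw [← hcx, cIso.norm_map]
  have hc0 : c ≠ 0 := by
    intro h0
    apply hx
    rw [← hcx, h0, map_zero]
  have hradC : ∀ z w : ℂ, ‖z‖ = ‖w‖ → f (cIso z) = f (cIso w) := by
    intro z w h
    exact hrad _ _ (by rw [cIso.norm_map, cIso.norm_map, h])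
  have hFC : Integrable (fun z : ℂ => f (cIso z)) :=
    (hmp.integrable_comp_emb hemb).mpr hf
  have hlogC : Integrable (fun z : ℂ => |f (cIso z)| * |Real.log ‖z‖|) := by
    have h := (hmp.integrable_comp_emb hemb).mpr hlog
    apply Integrable.congr h
    filter_upwards with z
    simp only [Function.comp_apply, cIso.norm_map]
  have key := newton_shell_complex (fun z => f (cIso z)) hradC hFC hlogC c hc0
  have hpre : ⇑cIso ⁻¹' (Metric.ball (0 : EuclideanSpace ℝ (Fin 2)) ‖x‖)
      = ball (0:ℂ) ‖c‖ := by
    ext z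
    simp only [Set.mem_preimage, mem_ball_zero_iff, cIso.norm_map, hnorm]
  have step1 : (∫ y, Real.log ‖x - y‖ * f y) = ∫ z : ℂ, Real.log ‖c - z‖ * f (cIso z) := by
    rw [← hmp.integral_comp hemb (fun y => Real.log ‖x - y‖ * f y)]
    apply MeasureTheory.integral_congr_ae
    filter_upwards with z
    have : ‖x - cIso z‖ = ‖c - z‖ := by
      rw [← hcx, ← map_sub, cIso.norm_map]
    rw [this]
  have step2 : (∫ y in Metric.ball (0 : EuclideanSpace ℝ (Fin 2)) ‖x‖, f y)
      = ∫ z in ball (0:ℂ) ‖c‖, f (cIso z) := by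
    rw [← hmp.setIntegral_preimage_emb hemb f (Metric.ball (0 : EuclideanSpace ℝ (Fin 2)) ‖x‖),
      hpre]
  have step3 : (∫ y in (Metric.ball (0 : EuclideanSpace ℝ (Fin 2)) ‖x‖)ᶜ, Real.log ‖y‖ * f y)
      = ∫ z in (ball (0:ℂ) ‖c‖)ᶜ, Real.log ‖z‖ * f (cIso z) := by
    rw [← hmp.setIntegral_preimage_emb hemb (fun y => Real.log ‖y‖ * f y)
      (Metric.ball (0 : EuclideanSpace ℝ (Fin 2)) ‖x‖)ᶜ, Set.preimage_compl, hpre]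
    apply MeasureTheory.setIntegral_congr_fun measurableSet_ball.compl
    intro z _
    simp only [cIso.norm_map]
  rw [step1, step2, step3, hnorm, key]
end

section
/- Let V ∈ C(ℝ²) satisfy V(x)/ln|x| → λ > 0 as |x| → ∞, and let τ > √λ. Define W_τ(x) = exp(−τ |x| √(ln |x|)) for |x| > 1. Then there exists R > 1 such that −ΔW_τ + V W_τ ≤ 0 on ℝ² ∖ B_R. -/
open Real Filter

noncomputable def gg (τ s : ℝ) : ℝ := -(τ * (s * Real.sqrt (Real.log s)))
noncomputable def gg1 (τ s : ℝ) : ℝ :=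
  -(τ * (Real.sqrt (Real.log s) + 1/2 * (Real.sqrt (Real.log s))⁻¹))
noncomputable def gg2 (τ s : ℝ) : ℝ :=
  -(τ * (1/2 * (Real.sqrt (Real.log s))⁻¹ * s⁻¹
    - 1/4 * ((Real.log s) * Real.sqrt (Real.log s))⁻¹ * s⁻¹))

lemma sqrtlog_deriv {s : ℝ} (hs : 1 < s) :
    HasDerivAt (fun u => Real.sqrt (Real.log u)) (1 / (2 * Real.sqrt (Real.log s)) * s⁻¹) s := by
  have hs0 : s ≠ 0 := by positivity
  have hL : 0 < Real.log s := Real.log_pos hs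
  exact (Real.hasDerivAt_sqrt hL.ne').comp s (Real.hasDerivAt_log hs0)

lemma gg_deriv {τ s : ℝ} (hs : 1 < s) : HasDerivAt (gg τ) (gg1 τ s) s := by
  have hs0 : (0:ℝ) < s := lt_trans one_pos hs
  have hL : 0 < Real.log s := Real.log_pos hs
  have hsq : 0 < Real.sqrt (Real.log s) := Real.sqrt_pos.2 hL
  have h2 := (((hasDerivAt_id s).mul (sqrtlog_deriv hs)).const_mul τ).neg
  refine h2.congr_deriv ?_; symm
  unfold gg1; simp only [id]; field_simp

lemma gg1_deriv {τ s : ℝ} (hs : 1 < s) : HasDerivAt (gg1 τ) (gg2 τ s) s := by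
  have hs0 : (0:ℝ) < s := lt_trans one_pos hs
  have hL : 0 < Real.log s := Real.log_pos hs
  have hsq : 0 < Real.sqrt (Real.log s) := Real.sqrt_pos.2 hL
  have hinv : HasDerivAt (fun u => (Real.sqrt (Real.log u))⁻¹)
      (-(1 / (2 * Real.sqrt (Real.log s)) * s⁻¹) / (Real.sqrt (Real.log s))^2) s :=
    (sqrtlog_deriv hs).inv hsq.ne'
  have h2 := (((sqrtlog_deriv hs).add (hinv.const_mul (1/2:ℝ))).const_mul τ).neg
  refine h2.congr_deriv ?_; symm
  unfold gg2
  rw [show Real.log s = (Real.sqrt (Real.log s))^2 from (Real.sq_sqrt hL.le).symm]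
  field_simp
  rw [Real.sqrt_sq hsq.le]
  ring

noncomputable def hh (τ s : ℝ) : ℝ := Real.exp (gg τ s)
noncomputable def hh1 (τ s : ℝ) : ℝ := gg1 τ s * Real.exp (gg τ s)
noncomputable def hh2 (τ s : ℝ) : ℝ := (gg2 τ s + (gg1 τ s)^2) * Real.exp (gg τ s)

lemma hh_deriv {τ s : ℝ} (hs : 1 < s) : HasDerivAt (hh τ) (hh1 τ s) s := by
  have h := (gg_deriv (τ := τ) hs).exp
  refine h.congr_deriv ?_; symm
  unfold hh1; ring

lemma hh1_deriv {τ s : ℝ} (hs : 1 < s) : HasDerivAt (hh1 τ) (hh2 τ s) s := by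
  have h := (gg1_deriv (τ := τ) hs).mul (gg_deriv (τ := τ) hs).exp
  refine h.congr_deriv ?_; symm
  unfold hh2; ring

lemma second_deriv_dir (τ r b : ℝ) (hr : 1 < r) (hb : b ^ 2 ≤ r ^ 2)
    (f : ℝ → ℝ)
    (hf : ∀ t, |t| < r - 1 → f t = hh τ (Real.sqrt (r ^ 2 + 2 * b * t + t ^ 2))) :
    deriv (deriv f) 0
      = hh2 τ r * (b / r) ^ 2 + hh1 τ r * ((r ^ 2 - b ^ 2) / (r ^ 3)) := by
  have hr0 : (0:ℝ) < r := lt_trans one_pos hr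
  have habs : |b| ≤ r := by
    nlinarith [sq_abs b, abs_nonneg b]
  set q : ℝ → ℝ := fun t => r ^ 2 + 2 * b * t + t ^ 2 with hq
  set ns : ℝ → ℝ := fun t => Real.sqrt (q t) with hns
  have hqlb : ∀ t, (r - |t|) ^ 2 ≤ q t := by
    intro t
    have h1 : |b * t| ≤ r * |t| := by
      rw [abs_mul]
      exact mul_le_mul_of_nonneg_right habs (abs_nonneg t)
    have h2 := neg_abs_le (b * t)
    have := sq_abs t
    simp only [hq]
    nlinarith
  have hns_gt : ∀ t, |t| < r - 1 → 1 < ns t := by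
    intro t ht
    have h1 : (0:ℝ) < r - |t| := by linarith
    have h2 : r - |t| ≤ ns t := by
      have := Real.sqrt_le_sqrt (hqlb t)
      rwa [Real.sqrt_sq h1.le] at this
    linarith
  have hq_pos : ∀ t, |t| < r - 1 → 0 < q t := by
    intro t ht
    have h1 : (0:ℝ) < r - |t| := by linarith
    exact lt_of_lt_of_le (by positivity) (hqlb t)
  have hq_deriv : ∀ t : ℝ, HasDerivAt q (2 * b + 2 * t) t := by
    intro t
    have h := ((hasDerivAt_const t (r ^ 2)).add
      ((hasDerivAt_id t).const_mul (2 * b))).add (hasDerivAt_pow 2 t)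
    refine h.congr_deriv ?_; symm
    simp
  have hns_deriv : ∀ t, |t| < r - 1 → HasDerivAt ns ((b + t) * (ns t)⁻¹) t := by
    intro t ht
    have hqt := hq_pos t ht
    have hnst : 0 < ns t := lt_trans one_pos (hns_gt t ht)
    have h := (Real.hasDerivAt_sqrt hqt.ne').comp t (hq_deriv t)
    refine h.congr_deriv ?_; symm
    field_simp
    ring
  have hU : {t : ℝ | |t| < r - 1} ∈ nhds (0:ℝ) := by
    have : {t : ℝ | |t| < r - 1} = Metric.ball (0:ℝ) (r - 1) := by
      ext t; simp [Real.dist_eq]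
    rw [this]
    exact Metric.ball_mem_nhds 0 (by linarith)
  -- F and F1
  set F : ℝ → ℝ := fun t => hh τ (ns t) with hF
  set F1 : ℝ → ℝ := fun t => hh1 τ (ns t) * ((b + t) * (ns t)⁻¹) with hF1
  have hF_deriv : ∀ t, |t| < r - 1 → HasDerivAt F (F1 t) t := by
    intro t ht
    exact (hh_deriv (hns_gt t ht)).comp t (hns_deriv t ht)
  have hns0 : ns 0 = r := by
    simp only [hns, hq]
    rw [show r ^ 2 + 2 * b * 0 + 0 ^ 2 = r ^ 2 by ring, Real.sqrt_sq hr0.le]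
  have h00 : |(0:ℝ)| < r - 1 := by simpa using by linarith
  have hA : HasDerivAt (fun t => hh1 τ (ns t)) (hh2 τ r * ((b + 0) * r⁻¹)) 0 := by
    have := (hh1_deriv (τ := τ) (s := ns 0) (by rw [hns0]; exact hr)).comp 0 (hns_deriv 0 h00)
    rwa [hns0] at this
  have hBnum : HasDerivAt (fun t : ℝ => b + t) 1 0 := by
    simpa using (hasDerivAt_id (0:ℝ)).const_add b
  have hBinv : HasDerivAt (fun t => (ns t)⁻¹)
      (-((b + 0) * r⁻¹) / r ^ 2) 0 := by
    have := (hns_deriv 0 h00).inv (by rw [hns0]; exact hr0.ne' : ns 0 ≠ 0)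
    rwa [hns0] at this
  have hF1_deriv : HasDerivAt F1
      (hh2 τ r * (b / r) ^ 2 + hh1 τ r * ((r ^ 2 - b ^ 2) / (r ^ 3))) 0 := by
    have h := hA.mul (hBnum.mul hBinv)
    simp only [hns0, Pi.mul_apply] at h
    refine h.congr_deriv ?_; symm
    field_simp
    ring
  -- now transfer
  have e1 : f =ᶠ[nhds 0] F :=
    Filter.eventually_of_mem hU (fun t ht => hf t ht)
  have e2 : deriv F =ᶠ[nhds 0] F1 :=
    Filter.eventually_of_mem hU (fun t ht => (hF_deriv t ht).deriv)
  have e3 : deriv f =ᶠ[nhds 0] F1 := e1.deriv.trans e2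
  rw [e3.deriv_eq]
  exact hF1_deriv.deriv

/-- The Laplacian on ℝ², as the sum of second partial derivatives. -/
noncomputable def planarLaplacian (f : EuclideanSpace ℝ (Fin 2) → ℝ)
    (x : EuclideanSpace ℝ (Fin 2)) : ℝ :=
  ∑ i : Fin 2, deriv (deriv (fun t : ℝ => f (x + t • EuclideanSpace.single i 1))) 0

set_option maxHeartbeats 1000000 in
theorem subsolution_log_potential (V : EuclideanSpace ℝ (Fin 2) → ℝ) (hV : Continuous V)
    (lam : ℝ) (hlam : 0 < lam)
    (hVlim : Tendsto (fun x => V x / Real.log ‖x‖)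
      (Bornology.cobounded (EuclideanSpace ℝ (Fin 2))) (nhds lam))
    (τ : ℝ) (hτ : Real.sqrt lam < τ)
    (W : EuclideanSpace ℝ (Fin 2) → ℝ)
    (hW : ∀ x : EuclideanSpace ℝ (Fin 2), 1 < ‖x‖ →
      W x = Real.exp (-τ * ‖x‖ * Real.sqrt (Real.log ‖x‖))) :
    ∃ R : ℝ, 1 < R ∧ ∀ x : EuclideanSpace ℝ (Fin 2), R ≤ ‖x‖ →
      -planarLaplacian W x + V x * W x ≤ 0 := by
  have hτ0 : 0 < τ := lt_of_le_of_lt (Real.sqrt_nonneg lam) hτ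
  have hlt : lam < τ ^ 2 := by nlinarith [Real.sq_sqrt hlam.le, Real.sqrt_nonneg lam]
  set μ : ℝ := (lam + τ ^ 2) / 2 with hμdef
  have hμτ : μ ≤ τ ^ 2 := by rw [hμdef]; linarith
  have hlamμ : lam < μ := by rw [hμdef]; linarith
  -- extract a radius from the limit hypothesis
  have hev : ∀ᶠ x in Bornology.cobounded (EuclideanSpace ℝ (Fin 2)),
      V x / Real.log ‖x‖ < μ := hVlim.eventually (gt_mem_nhds hlamμ)
  rw [← comap_norm_atTop, Filter.eventually_comap] at hev
  obtain ⟨R₀, hR₀⟩ := Filter.eventually_atTop.mp hev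
  refine ⟨max (max R₀ (Real.exp 1)) (36 / τ ^ 2 + 2), ?_, ?_⟩
  · have h1 : (1:ℝ) + 1 ≤ Real.exp 1 := by
      simpa using Real.add_one_le_exp 1
    have : (1:ℝ) < Real.exp 1 := by linarith
    exact lt_of_lt_of_le this (le_trans (le_max_right _ _) (le_max_left _ _))
  intro x hx
  set r : ℝ := ‖x‖ with hrdef
  have hrE : Real.exp 1 ≤ r :=
    le_trans (le_trans (le_max_right _ _) (le_max_left _ _)) hx
  have hr36 : 36 / τ ^ 2 + 2 ≤ r := le_trans (le_max_right _ _) hx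
  have hr1 : 1 < r := by
    have h1 : (1:ℝ) + 1 ≤ Real.exp 1 := by simpa using Real.add_one_le_exp 1
    linarith
  have hr0 : (0:ℝ) < r := lt_trans one_pos hr1
  have hL1 : 1 ≤ Real.log r := by
    rw [← Real.log_exp 1]
    exact Real.log_le_log (Real.exp_pos 1) hrE
  have hL0 : (0:ℝ) < Real.log r := lt_of_lt_of_le one_pos hL1
  have hVx' : V x / Real.log r < μ :=
    hR₀ r (le_trans (le_trans (le_max_left _ _) (le_max_left _ _)) hx) x rfl
  have hVx : V x ≤ μ * Real.log r := le_of_lt ((div_lt_iff₀ hL0).mp hVx')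
  -- norm along coordinate lines
  have hnrm : ∀ (i : Fin 2) (t : ℝ),
      ‖x + t • EuclideanSpace.single i (1:ℝ)‖
        = Real.sqrt (r ^ 2 + 2 * (x i) * t + t ^ 2) := by
    intro i t
    have h2 : (inner ℝ x (EuclideanSpace.single i (1:ℝ)) : ℝ) = x i := by
      rw [EuclideanSpace.inner_single_right]; simp
    have h1 : ‖x + t • EuclideanSpace.single i (1:ℝ)‖ ^ 2
        = r ^ 2 + 2 * (x i) * t + t ^ 2 := by
      rw [norm_add_sq_real, real_inner_smul_right, h2, norm_smul,
        EuclideanSpace.norm_single]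
      simp only [Real.norm_eq_abs, norm_one, mul_one, mul_pow, sq_abs]
      ring
    rw [← h1, Real.sqrt_sq (norm_nonneg _)]
  have hb2 : ∀ i : Fin 2, (x i) ^ 2 ≤ r ^ 2 := by
    intro i
    have h2 : (inner ℝ x (EuclideanSpace.single i (1:ℝ)) : ℝ) = x i := by
      rw [EuclideanSpace.inner_single_right]; simp
    have := abs_real_inner_le_norm x (EuclideanSpace.single i (1:ℝ))
    rw [h2, EuclideanSpace.norm_single, norm_one, mul_one] at this
    nlinarith [sq_abs (x i), abs_nonneg (x i)]
  -- W along coordinate lines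
  have hfW : ∀ (i : Fin 2) (t : ℝ), |t| < r - 1 →
      W (x + t • EuclideanSpace.single i (1:ℝ))
        = hh τ (Real.sqrt (r ^ 2 + 2 * (x i) * t + t ^ 2)) := by
    intro i t ht
    have hEt : ‖t • EuclideanSpace.single i (1:ℝ)‖ = |t| := by
      rw [norm_smul, EuclideanSpace.norm_single, norm_one, mul_one, Real.norm_eq_abs]
    have htri : r ≤ ‖x + t • EuclideanSpace.single i (1:ℝ)‖ + |t| := by
      have := norm_add_le (x + t • EuclideanSpace.single i (1:ℝ))
        (-(t • EuclideanSpace.single i (1:ℝ)))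
      simp only [add_neg_cancel_right, norm_neg] at this
      rw [hEt] at this
      exact this
    have hgt : 1 < ‖x + t • EuclideanSpace.single i (1:ℝ)‖ := by linarith
    rw [hW _ hgt, hnrm i t]
    unfold hh gg
    congr 1
    rw [← hnrm i t]
    ring
  -- second derivatives in each direction
  have hD : ∀ i : Fin 2,
      deriv (deriv (fun t : ℝ => W (x + t • EuclideanSpace.single i (1:ℝ)))) 0
        = hh2 τ r * (x i / r) ^ 2 + hh1 τ r * ((r ^ 2 - (x i) ^ 2) / r ^ 3) :=
    fun i => second_deriv_dir τ r (x i) hr1 (hb2 i) _ (hfW i)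
  have hsum : (x 0) ^ 2 + (x 1) ^ 2 = r ^ 2 := by
    have h1 : r ^ 2 = ∑ i : Fin 2, ‖x i‖ ^ 2 := by
      rw [hrdef, EuclideanSpace.norm_eq, Real.sq_sqrt (by positivity)]
    rw [Fin.sum_univ_two, Real.norm_eq_abs, Real.norm_eq_abs, sq_abs, sq_abs] at h1
    linarith
  have hLap : planarLaplacian W x = hh2 τ r + hh1 τ r / r := by
    unfold planarLaplacian
    rw [Fin.sum_univ_two, hD 0, hD 1]
    have e : hh2 τ r * (x 0 / r) ^ 2 + hh1 τ r * ((r ^ 2 - (x 0) ^ 2) / r ^ 3)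
        + (hh2 τ r * (x 1 / r) ^ 2 + hh1 τ r * ((r ^ 2 - (x 1) ^ 2) / r ^ 3))
        = hh2 τ r * (((x 0) ^ 2 + (x 1) ^ 2) / r ^ 2)
          + hh1 τ r * ((2 * r ^ 2 - ((x 0) ^ 2 + (x 1) ^ 2)) / r ^ 3) := by
      ring
    rw [e, hsum]
    field_simp
    ring
  have hWx : W x = hh τ r := by
    rw [hW x hr1]
    unfold hh gg
    congr 1
    ring
  rw [hLap, hWx]
  -- key scalar inequality
  set L : ℝ := Real.log r with hLdef
  set c : ℝ := Real.sqrt L with hcdef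
  have hc2 : c ^ 2 = L := Real.sq_sqrt (by linarith)
  have hc1 : 1 ≤ c := by nlinarith [Real.sqrt_nonneg L]
  have hc0 : (0:ℝ) < c := lt_of_lt_of_le one_pos hc1
  have hrs : (Real.sqrt r) ^ 2 = r := Real.sq_sqrt hr0.le
  have hrs0 : 0 < Real.sqrt r := Real.sqrt_pos.2 hr0
  have hsτ : 6 ≤ τ * Real.sqrt r := by
    have h6 : (6 / τ) ^ 2 ≤ r := by
      rw [div_pow]
      have : (6:ℝ) ^ 2 / τ ^ 2 = 36 / τ ^ 2 := by norm_num
      rw [this]; linarith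
    have h7 : 6 / τ ≤ Real.sqrt r := by
      rw [show (6 / τ : ℝ) = Real.sqrt ((6 / τ) ^ 2) from
        (Real.sqrt_sq (by positivity)).symm]
      exact Real.sqrt_le_sqrt h6
    calc (6:ℝ) = τ * (6 / τ) := by field_simp
    _ ≤ τ * Real.sqrt r := by
        exact mul_le_mul_of_nonneg_left h7 hτ0.le
  have hLs : L ≤ 2 * Real.sqrt r := by
    have h1 : Real.log (Real.sqrt r) ≤ Real.sqrt r - 1 :=
      Real.log_le_sub_one_of_pos hrs0
    have h2 : L = 2 * Real.log (Real.sqrt r) := by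
      rw [hLdef, ← hrs, Real.log_pow]; norm_num
    linarith
  have h3L : 3 * L ≤ τ * r := by
    have ha : 6 * Real.sqrt r ≤ τ * Real.sqrt r * Real.sqrt r :=
      mul_le_mul_of_nonneg_right hsτ hrs0.le
    have hb : τ * Real.sqrt r * Real.sqrt r = τ * r := by
      rw [mul_assoc, Real.mul_self_sqrt hr0.le]
    linarith
  have hcL : c ≤ L := by
    calc c = c ^ 1 := (pow_one c).symm
    _ ≤ c ^ 2 := pow_le_pow_right₀ hc1 one_le_two
    _ = L := hc2
  have hcinv : c⁻¹ ≤ 1 := by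
    rw [inv_le_one_iff₀]; right; exact hc1
  have hcc : c * c⁻¹ = 1 := mul_inv_cancel₀ hc0.ne'
  have hrinv : (0:ℝ) < r⁻¹ := by positivity
  -- bound each piece
  have h1 : τ ^ 2 * (L + 1) ≤ (gg1 τ r) ^ 2 := by
    have e : (gg1 τ r) ^ 2 = τ ^ 2 * ((c + 1/2 * c⁻¹) ^ 2) := by
      unfold gg1; rw [← hLdef, ← hcdef]; ring
    have e2 : (c + 1/2 * c⁻¹) ^ 2 = L + 1 + 1/4 * (c⁻¹) ^ 2 := by
      linear_combination hc2 + hcc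
    rw [e, e2]
    nlinarith [sq_nonneg (c⁻¹), sq_nonneg τ]
  have h2g : -(τ * r⁻¹) ≤ gg2 τ r := by
    have hLC : (0:ℝ) < (L * c)⁻¹ := by positivity
    unfold gg2
    rw [← hLdef, ← hcdef]
    have hb : 1/2 * c⁻¹ * r⁻¹ - 1/4 * ((L * c)⁻¹) * r⁻¹ ≤ r⁻¹ := by
      nlinarith
    have e : -(τ * (1/2 * c⁻¹ * r⁻¹ - 1/4 * ((L * c)⁻¹) * r⁻¹))
        = -(τ * (1/2 * c⁻¹ * r⁻¹ - 1/4 * (L * c)⁻¹ * r⁻¹)) := by ring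
    nlinarith [mul_le_mul_of_nonneg_left hb hτ0.le]
  have h3g : -(τ * (c + 1) * r⁻¹) ≤ gg1 τ r / r := by
    have e : gg1 τ r / r = -(τ * (c + 1/2 * c⁻¹) * r⁻¹) := by
      unfold gg1; rw [← hLdef, ← hcdef]; ring
    rw [e]
    have hpos : (0:ℝ) ≤ τ * r⁻¹ * (1 - 1/2 * c⁻¹) :=
      mul_nonneg (mul_nonneg hτ0.le hrinv.le) (by linarith)
    nlinarith [hpos]
  have h4 : τ * (c + 2) * r⁻¹ ≤ τ ^ 2 := by
    have h5 : c + 2 ≤ τ * r := by linarith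
    have h6 : (c + 2) * r⁻¹ ≤ τ := by
      rw [← div_eq_mul_inv, div_le_iff₀ hr0]
      linarith [h5]
    calc τ * (c + 2) * r⁻¹ = τ * ((c + 2) * r⁻¹) := by ring
    _ ≤ τ * τ := mul_le_mul_of_nonneg_left h6 hτ0.le
    _ = τ ^ 2 := by ring
  have hμL : μ * L ≤ τ ^ 2 * L := mul_le_mul_of_nonneg_right hμτ (by linarith)
  have key : V x ≤ (gg1 τ r) ^ 2 + gg2 τ r + gg1 τ r / r := by
    have e1 : τ * r⁻¹ + τ * (c + 1) * r⁻¹ = τ * (c + 2) * r⁻¹ := by ring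
    have e2 : τ ^ 2 * (L + 1) = τ ^ 2 * L + τ ^ 2 := by ring
    have hVL : V x ≤ μ * L := by rw [hLdef]; exact hVx
    linarith
  -- conclude
  have hE : (0:ℝ) < Real.exp (gg τ r) := Real.exp_pos _
  unfold hh hh1 hh2
  have hmul := mul_le_mul_of_nonneg_right key hE.le
  have heq : ((gg1 τ r) ^ 2 + gg2 τ r + gg1 τ r / r) * Real.exp (gg τ r)
      = (gg2 τ r + (gg1 τ r) ^ 2) * Real.exp (gg τ r)
        + gg1 τ r * Real.exp (gg τ r) / r := by ring
  rw [heq] at hmul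
  linarith
end
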